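/- Let d ≥ 1, let ρ be a density matrix on ℂ^d ⊗ ℂ^d, let p_1, …, p_m be strictly positive reals with Σ_i p_i = 1, and let U_i, W_i be d×d unitary matrices. If Σ_i p_i (U_i ⊗ W_i) ρ (U_i ⊗ W_i)† = V ρ V†, then for every i one has (U_i ⊗ W_i) ρ (U_i ⊗ W_i)† = V ρ V†; in particular the swap of ρ can then be realized by a single product unitary. -/
import Mathlib

open Matrix Kronecker
open scoped Classical ComplexOrder

noncomputable section

abbrev Idx (d : ℕ) := Fin d × Fin d

/-- Partial trace over the second factor. -/
def trB {d : ℕ} (M : Matrix (Idx d) (Idx d) ℂ) : Matrix (Fin d) (Fin d) ℂ :=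
  fun i j => ∑ k, M (i, k) (j, k)

/-- Rank-one projector-like matrix `ψψ†` on the bipartite space. -/
def outer {d : ℕ} (ψ : Idx d → ℂ) : Matrix (Idx d) (Idx d) ℂ :=
  Matrix.vecMulVec ψ (fun x => (starRingEnd ℂ) (ψ x))

/-- Pure-state G-concurrence `g(ψ) = d (det Tr_B ψψ†)^{1/d}`. -/
def gPure (d : ℕ) (ψ : Idx d → ℂ) : ℝ :=
  (d : ℝ) * ((trB (outer ψ)).det.re) ^ ((1 : ℝ) / d)

/-- Mixed-state G-concurrence via the convex roof. -/
def Gconc (d : ℕ) (ρ : Matrix (Idx d) (Idx d) ℂ) : ℝ :=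
  sInf { r : ℝ | ∃ (m : ℕ) (q : Fin m → ℝ) (ψ : Fin m → (Idx d → ℂ)),
    (∀ j, 0 ≤ q j) ∧ (∀ j, ∑ x, Complex.normSq (ψ j x) = 1) ∧
    ρ = ∑ j, (q j : ℂ) • outer (ψ j) ∧
    r = ∑ j, q j * gPure d (ψ j) }

/-- The swap unitary `V(x ⊗ y) = y ⊗ x`. -/
def swapV (d : ℕ) : Matrix (Idx d) (Idx d) ℂ :=
  fun x y => if x.1 = y.2 ∧ x.2 = y.1 then 1 else 0

/-- Frobenius norm squared as a trace. -/
lemma trace_conjT_mul_self {n : Type*} [Fintype n] (X : Matrix n n ℂ) :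
    (Xᴴ * X).trace = ((∑ x, ∑ y, Complex.normSq (X x y) : ℝ) : ℂ) := by
  simp only [Matrix.trace, Matrix.diag, Matrix.mul_apply, Matrix.conjTranspose_apply]
  push_cast
  rw [Finset.sum_comm]
  refine Finset.sum_congr rfl fun x _ => Finset.sum_congr rfl fun y _ => ?_
  rw [Complex.star_def, ← Complex.normSq_eq_conj_mul_self]

lemma kron_conjT {l m n q : Type*} (A : Matrix l m ℂ) (B : Matrix n q ℂ) :
    (A ⊗ₖ B)ᴴ = Aᴴ ⊗ₖ Bᴴ := by
  ext x y
  simp [Matrix.conjTranspose_apply, Matrix.kroneckerMap_apply]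

/-- Unitary conjugation preserves the Frobenius trace form. -/
lemma conj_trace_eq {n : Type*} [Fintype n] [DecidableEq n] (G ρ : Matrix n n ℂ)
    (hG : Gᴴ * G = 1) :
    ((G * ρ * Gᴴ)ᴴ * (G * ρ * Gᴴ)).trace = (ρᴴ * ρ).trace := by
  have hG' : G * Gᴴ = 1 := mul_eq_one_comm.mp hG
  have e1 : (G * ρ * Gᴴ)ᴴ * (G * ρ * Gᴴ) = G * (ρᴴ * ρ) * Gᴴ := by
    simp only [Matrix.conjTranspose_mul, Matrix.conjTranspose_conjTranspose, Matrix.mul_assoc]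
    rw [show Gᴴ * (G * (ρ * Gᴴ)) = ρ * Gᴴ by rw [← Matrix.mul_assoc, hG, Matrix.one_mul]]
  rw [e1, Matrix.trace_mul_comm, ← Matrix.mul_assoc, hG, Matrix.one_mul]

theorem mixture_of_product_unitaries_swapping_implies_each_swaps
    (d : ℕ) (hd : 1 ≤ d)
    (ρ : Matrix (Idx d) (Idx d) ℂ) (hpsd : ρ.PosSemidef) (htr : ρ.trace = 1)
    (m : ℕ) (p : Fin m → ℝ) (hp : ∀ i, 0 < p i) (hps : ∑ i, p i = 1)
    (U W : Fin m → Matrix (Fin d) (Fin d) ℂ)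
    (hU : ∀ i, U i ∈ Matrix.unitaryGroup (Fin d) ℂ)
    (hW : ∀ i, W i ∈ Matrix.unitaryGroup (Fin d) ℂ)
    (heq : ∑ i, (p i : ℂ) • ((U i ⊗ₖ W i) * ρ * (U i ⊗ₖ W i)ᴴ)
            = swapV d * ρ * (swapV d)ᴴ) :
    ∀ i, (U i ⊗ₖ W i) * ρ * (U i ⊗ₖ W i)ᴴ = swapV d * ρ * (swapV d)ᴴ := by
  set A : Fin m → Matrix (Idx d) (Idx d) ℂ :=
    fun i => (U i ⊗ₖ W i) * ρ * (U i ⊗ₖ W i)ᴴ with hAdef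
  set B : Matrix (Idx d) (Idx d) ℂ := swapV d * ρ * (swapV d)ᴴ with hBdef
  -- unitarity of the product unitaries
  have hGu : ∀ i, (U i ⊗ₖ W i)ᴴ * (U i ⊗ₖ W i) = 1 := by
    intro i
    rw [kron_conjT, ← Matrix.mul_kronecker_mul]
    have h1 : (U i)ᴴ * U i = 1 := by
      have := (Matrix.mem_unitaryGroup_iff'.mp (hU i))
      simpa [Matrix.star_eq_conjTranspose] using this
    have h2 : (W i)ᴴ * W i = 1 := by
      have := (Matrix.mem_unitaryGroup_iff'.mp (hW i))
      simpa [Matrix.star_eq_conjTranspose] using this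
    rw [h1, h2, Matrix.one_kronecker_one]
  -- unitarity of the swap
  have hswap' : ∀ z w : Idx d, (z.1 = w.2 ∧ z.2 = w.1) ↔ z = (w.2, w.1) := by
    intro z w
    constructor
    · rintro ⟨a, b⟩; exact Prod.ext a b
    · rintro rfl; exact ⟨rfl, rfl⟩
  have hV : (swapV d)ᴴ * swapV d = 1 := by
    ext x y
    simp only [Matrix.mul_apply, Matrix.conjTranspose_apply, swapV, Matrix.one_apply, hswap']
    rw [Finset.sum_eq_single ((x.2, x.1) : Idx d)]
    · simp [Prod.ext_iff, and_comm]
    · intro z _ hz; simp [hz]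
    · intro h; exact absurd (Finset.mem_univ _) h
  -- the common Frobenius norm
  set c : ℂ := (ρᴴ * ρ).trace with hcdef
  have hAtr : ∀ i, ((A i)ᴴ * A i).trace = c := fun i => conj_trace_eq _ _ (hGu i)
  have hBtr : (Bᴴ * B).trace = c := conj_trace_eq _ _ hV
  have hBH : (∑ i, (p i : ℂ) • A i)ᴴ = ∑ i, (p i : ℂ) • (A i)ᴴ := by
    rw [Matrix.conjTranspose_sum]
    refine Finset.sum_congr rfl fun i _ => ?_
    rw [Matrix.conjTranspose_smul, Complex.star_def, Complex.conj_ofReal]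
  have hsum1 : ∑ i, (p i : ℂ) = 1 := by
    rw [← Complex.ofReal_sum, hps, Complex.ofReal_one]
  have h1 : ∑ i, (p i : ℂ) • ((A i)ᴴ * B).trace = c := by
    have : ∑ i, (p i : ℂ) • ((A i)ᴴ * B).trace
        = ((∑ i, (p i : ℂ) • A i)ᴴ * B).trace := by
      rw [hBH, Finset.sum_mul, Matrix.trace_sum]
      refine Finset.sum_congr rfl fun i _ => ?_
      rw [Matrix.smul_mul, Matrix.trace_smul]
    rw [this, heq, hBtr]
  have h2 : ∑ i, (p i : ℂ) • (Bᴴ * A i).trace = c := by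
    have : ∑ i, (p i : ℂ) • (Bᴴ * A i).trace = (Bᴴ * ∑ i, (p i : ℂ) • A i).trace := by
      rw [Matrix.mul_sum, Matrix.trace_sum]
      refine Finset.sum_congr rfl fun i _ => ?_
      rw [Matrix.mul_smul, Matrix.trace_smul]
    rw [this, heq, hBtr]
  have hkey : ∑ i, (p i : ℂ) • (((A i - B)ᴴ * (A i - B)).trace) = 0 := by
    have expand : ∀ i, ((A i - B)ᴴ * (A i - B)).trace
        = ((A i)ᴴ * A i).trace - ((A i)ᴴ * B).trace - (Bᴴ * A i).trace + (Bᴴ * B).trace := by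
      intro i
      rw [Matrix.conjTranspose_sub, Matrix.sub_mul, Matrix.mul_sub, Matrix.mul_sub,
        Matrix.trace_sub, Matrix.trace_sub, Matrix.trace_sub]
      ring
    calc ∑ i, (p i : ℂ) • (((A i - B)ᴴ * (A i - B)).trace)
        = (∑ i, (p i : ℂ) • ((A i)ᴴ * A i).trace) - (∑ i, (p i : ℂ) • ((A i)ᴴ * B).trace)
          - (∑ i, (p i : ℂ) • (Bᴴ * A i).trace) + (∑ i, (p i : ℂ) • (Bᴴ * B).trace) := by
          simp only [expand, smul_sub, smul_add, Finset.sum_sub_distrib, Finset.sum_add_distrib]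
      _ = 0 := by
          simp only [hAtr, hBtr, h1, h2, ← Finset.sum_smul, hsum1, one_smul]
          ring
  -- turn into a real statement
  set r : Fin m → ℝ := fun i => ∑ x, ∑ y, Complex.normSq ((A i - B) x y) with hrdef
  have hrtrace : ∀ i, ((A i - B)ᴴ * (A i - B)).trace = ((r i : ℝ) : ℂ) := fun i =>
    trace_conjT_mul_self (A i - B)
  have hrsum : ∑ i, p i * r i = 0 := by
    have : ((∑ i, p i * r i : ℝ) : ℂ) = 0 := by
      rw [← hkey]
      push_cast
      refine Finset.sum_congr rfl fun i _ => ?_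
      rw [hrtrace i, smul_eq_mul]
    exact_mod_cast this
  have hrnn : ∀ i, 0 ≤ r i := by
    intro i
    apply Finset.sum_nonneg; intro x _
    apply Finset.sum_nonneg; intro y _
    exact Complex.normSq_nonneg _
  have hrzero : ∀ i, r i = 0 := by
    intro i
    have hterm : ∀ j ∈ Finset.univ, (0:ℝ) ≤ p j * r j := fun j _ =>
      mul_nonneg (hp j).le (hrnn j)
    have := (Finset.sum_eq_zero_iff_of_nonneg hterm).mp hrsum i (Finset.mem_univ i)
    rcases mul_eq_zero.mp this with h | h
    · exact absurd h (hp i).ne'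
    · exact h
  intro i
  have hAB : A i - B = 0 := by
    ext x y
    have hx : ∑ y, Complex.normSq ((A i - B) x y) = 0 := by
      have hnn : ∀ x' ∈ Finset.univ, (0:ℝ) ≤ ∑ y, Complex.normSq ((A i - B) x' y) := by
        intro x' _; exact Finset.sum_nonneg fun y _ => Complex.normSq_nonneg _
      exact (Finset.sum_eq_zero_iff_of_nonneg hnn).mp (hrzero i) x (Finset.mem_univ x)
    have hnn : ∀ y' ∈ Finset.univ, (0:ℝ) ≤ Complex.normSq ((A i - B) x y') :=
      fun y' _ => Complex.normSq_nonneg _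
    have := (Finset.sum_eq_zero_iff_of_nonneg hnn).mp hx y (Finset.mem_univ y)
    simpa using Complex.normSq_eq_zero.mp this
  have := sub_eq_zero.mp hAB
  simpa [hAdef, hBdef] using this
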